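/- Let a ≥ 0 and let q be an offspring distribution on {1,2,…} with finite first moment m₁. Define the Picard iterates: μ_t^{(0)} = e^{−at} μ₀ ∘ T_t^{−1}, and ⟨μ_t^{(n)}, f⟩ = e^{−at}⟨μ₀, T_t f⟩ + a∫₀ᵗ e^{a(s−t)}⟨μ_s^{(n−1)} * (μ_s^{(n−1)})^q, T_{t−s}f⟩ ds. Then for all m > n ≥ 1 and t ≥ 0, ‖μ_t^{(n)} − μ_t^{(m)}‖_TV ≤ 2 Σ_{k=n}^∞ aᵏ(m₁+1)ᵏ tᵏ / k!, so the iterates form a Cauchy sequence in total variation, uniformly on compact time intervals. -/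

import Mathlib

open MeasureTheory ProbabilityTheory Filter
open scoped ENNReal NNReal

noncomputable section

/-- Truncated Euclidean cost `ρ(x,y) = min(1, |x-y|)` on `ℝ≥0`. -/
def rho (x y : ℝ≥0) : ℝ := min 1 |(x : ℝ) - (y : ℝ)|

/-- `π` is a coupling of `μ` and `ν`. -/
def IsCoupling (π : Measure (ℝ≥0 × ℝ≥0)) (μ ν : Measure ℝ≥0) : Prop :=
  π.map Prod.fst = μ ∧ π.map Prod.snd = ν

/-- Wasserstein distance for the truncated cost. -/
def W (μ ν : Measure ℝ≥0) : ℝ :=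
  sInf { r : ℝ | ∃ π : Measure (ℝ≥0 × ℝ≥0),
    IsProbabilityMeasure π ∧ IsCoupling π μ ν ∧ r = ∫ p, rho p.1 p.2 ∂π }

/-- Convolution of two measures on `ℝ≥0`. -/
def conv (μ ν : Measure ℝ≥0) : Measure ℝ≥0 :=
  (μ.prod ν).map (fun p => p.1 + p.2)

/-- `k`-fold convolution power (`convPow μ 0 = δ₀`). -/
def convPow (μ : Measure ℝ≥0) : ℕ → Measure ℝ≥0
  | 0 => Measure.dirac 0
  | n + 1 => conv (convPow μ n) μ

/-- The `q`-mixture `μ^q = ∑_{k≥1} q_k μ^{*k}` (`q k` = weight of `k`). -/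
def qMix (q : ℕ → ℝ≥0) (μ : Measure ℝ≥0) : Measure ℝ≥0 :=
  Measure.sum (fun k => ((q (k + 1) : ℝ≥0∞)) • convPow μ (k + 1))

/-- Total variation norm of the difference of two finite measures. -/
def tvDist (μ ν : Measure ℝ≥0) : ℝ :=
  sSup { r : ℝ | ∃ s : Set ℝ≥0, MeasurableSet s ∧
    r = |(μ s).toReal - (ν s).toReal| + |(μ sᶜ).toReal - (ν sᶜ).toReal| }

open Set

lemma cdr_integrable {α : Type*} [MeasurableSpace α] {μ : Measure α} [IsFiniteMeasure μ] {f : α → ℝ} {C : ℝ}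
    (hf : AEStronglyMeasurable f μ) (hb : ∀ x, |f x| ≤ C) : Integrable f μ :=
  ⟨hf, HasFiniteIntegral.of_bounded (C := C) (ae_of_all _ hb)⟩

lemma cdr_abs_integral_le {μ : Measure ℝ≥0} [IsFiniteMeasure μ] {f : ℝ≥0 → ℝ}
    (hb : ∀ x, |f x| ≤ 1) : |∫ x, f x ∂μ| ≤ (μ univ).toReal := by
  rw [← measureReal_def]
  simpa using norm_integral_le_of_norm_le_const (μ := μ) (f := f) (C := 1) (ae_of_all _ hb)

lemma conv_univ (μ ν : Measure ℝ≥0) [SFinite μ] [SFinite ν] :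
    conv μ ν univ = μ univ * ν univ := by
  rw [conv, Measure.map_apply measurable_add MeasurableSet.univ]
  simp [← Set.univ_prod_univ]

lemma integral_conv {μ ν : Measure ℝ≥0} [IsFiniteMeasure μ] [IsFiniteMeasure ν]
    {g : ℝ≥0 → ℝ} (hg : Measurable g) {C : ℝ} (hb : ∀ x, |g x| ≤ C) :
    ∫ x, g x ∂(conv μ ν) = ∫ x, ∫ y, g (x + y) ∂ν ∂μ := by
  rw [conv, integral_map measurable_add.aemeasurable hg.aestronglyMeasurable]
  exact integral_prod _ (cdr_integrable (f := fun p : ℝ≥0 × ℝ≥0 => g (p.1 + p.2))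
      (C := C) ((hg.comp measurable_add).aestronglyMeasurable) (fun p => hb _))
    |>.trans rfl

lemma tvSet_bdd (μ ν : Measure ℝ≥0) [IsFiniteMeasure μ] [IsFiniteMeasure ν] :
    ∀ r ∈ { r : ℝ | ∃ s : Set ℝ≥0, MeasurableSet s ∧
      r = |(μ s).toReal - (ν s).toReal| + |(μ sᶜ).toReal - (ν sᶜ).toReal| },
      r ≤ (μ univ).toReal + (ν univ).toReal := by
  rintro r ⟨s, hs, rfl⟩
  have h1 : |(μ s).toReal - (ν s).toReal| ≤ (μ s).toReal + (ν s).toReal := by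
    rw [abs_sub_comm]
    refine (abs_sub _ _).trans ?_
    simp [abs_of_nonneg ENNReal.toReal_nonneg, add_comm]
  have h2 : |(μ sᶜ).toReal - (ν sᶜ).toReal| ≤ (μ sᶜ).toReal + (ν sᶜ).toReal := by
    rw [abs_sub_comm]
    refine (abs_sub _ _).trans ?_
    simp [abs_of_nonneg ENNReal.toReal_nonneg, add_comm]
  have hμ : (μ s).toReal + (μ sᶜ).toReal = (μ univ).toReal := by
    rw [← ENNReal.toReal_add (measure_ne_top _ _) (measure_ne_top _ _),
      measure_add_measure_compl hs]
  have hν : (ν s).toReal + (ν sᶜ).toReal = (ν univ).toReal := by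
    rw [← ENNReal.toReal_add (measure_ne_top _ _) (measure_ne_top _ _),
      measure_add_measure_compl hs]
  linarith

lemma tvSet_bddAbove (μ ν : Measure ℝ≥0) [IsFiniteMeasure μ] [IsFiniteMeasure ν] :
    BddAbove { r : ℝ | ∃ s : Set ℝ≥0, MeasurableSet s ∧
      r = |(μ s).toReal - (ν s).toReal| + |(μ sᶜ).toReal - (ν sᶜ).toReal| } :=
  ⟨_, fun _ hr => tvSet_bdd μ ν _ hr⟩

lemma tvDist_nonneg (μ ν : Measure ℝ≥0) [IsFiniteMeasure μ] [IsFiniteMeasure ν] :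
    0 ≤ tvDist μ ν := by
  have hmem : |(μ univ).toReal - (ν univ).toReal| + |(μ univᶜ).toReal - (ν univᶜ).toReal| ∈
      { r : ℝ | ∃ s : Set ℝ≥0, MeasurableSet s ∧
        r = |(μ s).toReal - (ν s).toReal| + |(μ sᶜ).toReal - (ν sᶜ).toReal| } :=
    ⟨univ, MeasurableSet.univ, rfl⟩
  refine le_trans (by positivity) (le_csSup (tvSet_bddAbove μ ν) hmem)

lemma tvDist_le {μ ν : Measure ℝ≥0} [IsFiniteMeasure μ] [IsFiniteMeasure ν] {B : ℝ}
    (hB : 0 ≤ B)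
    (h : ∀ f : ℝ≥0 → ℝ, Measurable f → (∀ x, |f x| ≤ 1) →
      (∫ x, f x ∂μ) - (∫ x, f x ∂ν) ≤ B) :
    tvDist μ ν ≤ B := by
  classical
  refine Real.sSup_le ?_ hB
  rintro r ⟨s, hs, rfl⟩
  set e₁ : ℝ := if (ν s).toReal ≤ (μ s).toReal then 1 else -1 with he₁
  set e₂ : ℝ := if (ν sᶜ).toReal ≤ (μ sᶜ).toReal then 1 else -1 with he₂
  set f : ℝ≥0 → ℝ := fun x => if x ∈ s then e₁ else e₂ with hf
  have hfm : Measurable f := Measurable.ite hs measurable_const measurable_const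
  have he₁b : |e₁| ≤ 1 := by rw [he₁]; split <;> simp
  have he₂b : |e₂| ≤ 1 := by rw [he₂]; split <;> simp
  have hfb : ∀ x, |f x| ≤ 1 := by
    intro x
    by_cases hx : x ∈ s <;> simp only [hf, hx, if_true, if_false] <;> assumption
  have hfeq : f = fun x => e₁ * s.indicator (fun _ => (1:ℝ)) x
      + e₂ * sᶜ.indicator (fun _ => (1:ℝ)) x := by
    funext x
    by_cases hx : x ∈ s <;> simp [hf, hx]
  have hint : ∀ (ρ : Measure ℝ≥0) [IsFiniteMeasure ρ],
      ∫ x, f x ∂ρ = e₁ * (ρ s).toReal + e₂ * (ρ sᶜ).toReal := by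
    intro ρ hρ
    rw [hfeq]
    rw [integral_add ((((integrable_const (1:ℝ)).indicator hs)).const_mul e₁)
      ((((integrable_const (1:ℝ)).indicator hs.compl)).const_mul e₂),
      integral_const_mul, integral_const_mul,
      integral_indicator hs, integral_indicator hs.compl]
    simp [Measure.restrict_apply_univ, measureReal_def]
  have key : (∫ x, f x ∂μ) - (∫ x, f x ∂ν)
      = e₁ * ((μ s).toReal - (ν s).toReal) + e₂ * ((μ sᶜ).toReal - (ν sᶜ).toReal) := by
    rw [hint μ, hint ν]; ring
  have habs1 : e₁ * ((μ s).toReal - (ν s).toReal) = |(μ s).toReal - (ν s).toReal| := by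
    rw [he₁]; split <;> rename_i h' <;> [rw [abs_of_nonneg (by linarith)];
      rw [abs_of_neg (by push_neg at h'; linarith)]] <;> ring
  have habs2 : e₂ * ((μ sᶜ).toReal - (ν sᶜ).toReal) = |(μ sᶜ).toReal - (ν sᶜ).toReal| := by
    rw [he₂]; split <;> rename_i h' <;> [rw [abs_of_nonneg (by linarith)];
      rw [abs_of_neg (by push_neg at h'; linarith)]] <;> ring
  calc |(μ s).toReal - (ν s).toReal| + |(μ sᶜ).toReal - (ν sᶜ).toReal|
      = (∫ x, f x ∂μ) - (∫ x, f x ∂ν) := by rw [key, habs1, habs2]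
    _ ≤ B := h f hfm hfb

lemma cdr_integrable' {α : Type*} [MeasurableSpace α] {μ : Measure α} [IsFiniteMeasure μ]
    {f : α → ℝ} {C : ℝ} (hf : AEStronglyMeasurable f μ) (hb : ∀ x, |f x| ≤ C) :
    Integrable f μ :=
  ⟨hf, HasFiniteIntegral.of_bounded (C := C) (ae_of_all _ hb)⟩

lemma cdr_integral_sub_le {ρ σ : Measure ℝ≥0} [IsFiniteMeasure ρ] [IsFiniteMeasure σ]
    (h : σ ≤ ρ) {f : ℝ≥0 → ℝ} (hf : Measurable f) (hb : ∀ x, |f x| ≤ 1) :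
    (∫ x, f x ∂ρ) - (∫ x, f x ∂σ) ≤ (ρ univ).toReal - (σ univ).toReal := by
  set d : Measure ℝ≥0 := ρ - σ with hd
  haveI : IsFiniteMeasure d := by
    refine ⟨lt_of_le_of_lt ?_ (measure_lt_top ρ univ)⟩
    exact Measure.sub_le (μ := ρ) (ν := σ) univ
  have hsplit : d + σ = ρ := Measure.sub_add_cancel_of_le h
  have hint : ∫ x, f x ∂ρ = (∫ x, f x ∂d) + ∫ x, f x ∂σ := by
    rw [← hsplit, integral_add_measure
      (cdr_integrable' hf.aestronglyMeasurable hb) (cdr_integrable' hf.aestronglyMeasurable hb)]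
  have habs : |∫ x, f x ∂d| ≤ (d univ).toReal := by
    rw [← measureReal_def]
    simpa using norm_integral_le_of_norm_le_const (μ := d) (f := f) (C := 1) (ae_of_all _ hb)
  have hduniv : (d univ).toReal = (ρ univ).toReal - (σ univ).toReal := by
    rw [hd, Measure.sub_apply MeasurableSet.univ h,
      ENNReal.toReal_sub_of_le (h univ) (measure_ne_top _ _)]
  have := (le_abs_self _).trans habs
  rw [hduniv] at this
  linarith [hint]

lemma le_tvDistSet {μ ν : Measure ℝ≥0} [IsFiniteMeasure μ] [IsFiniteMeasure ν] {f : ℝ≥0 → ℝ}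
    (hf : Measurable f) (hb : ∀ x, |f x| ≤ 1)
    (hbdd : BddAbove { r : ℝ | ∃ s : Set ℝ≥0, MeasurableSet s ∧
        r = |(μ s).toReal - (ν s).toReal| + |(μ sᶜ).toReal - (ν sᶜ).toReal| }) :
    (∫ x, f x ∂μ) - (∫ x, f x ∂ν) ≤
      sSup { r : ℝ | ∃ s : Set ℝ≥0, MeasurableSet s ∧
        r = |(μ s).toReal - (ν s).toReal| + |(μ sᶜ).toReal - (ν sᶜ).toReal| } := by
  obtain ⟨s, hs, hpos, hneg⟩ := hahn_decomposition (μ := μ) (ν := ν)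
  have hle1 : ν.restrict s ≤ μ.restrict s := by
    refine Measure.le_iff.2 fun A hA => ?_
    rw [Measure.restrict_apply hA, Measure.restrict_apply hA]
    exact hpos _ (hA.inter hs) inter_subset_right
  have hle2 : μ.restrict sᶜ ≤ ν.restrict sᶜ := by
    refine Measure.le_iff.2 fun A hA => ?_
    rw [Measure.restrict_apply hA, Measure.restrict_apply hA]
    exact hneg _ (hA.inter hs.compl) inter_subset_right
  have hμsplit : ∫ x, f x ∂μ = (∫ x, f x ∂μ.restrict s) + ∫ x, f x ∂μ.restrict sᶜ := by
    rw [← integral_add_measure (cdr_integrable' hf.aestronglyMeasurable hb)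
      (cdr_integrable' hf.aestronglyMeasurable hb), Measure.restrict_add_restrict_compl hs]
  have hνsplit : ∫ x, f x ∂ν = (∫ x, f x ∂ν.restrict s) + ∫ x, f x ∂ν.restrict sᶜ := by
    rw [← integral_add_measure (cdr_integrable' hf.aestronglyMeasurable hb)
      (cdr_integrable' hf.aestronglyMeasurable hb), Measure.restrict_add_restrict_compl hs]
  have h1 : (∫ x, f x ∂μ.restrict s) - (∫ x, f x ∂ν.restrict s)
      ≤ (μ s).toReal - (ν s).toReal := by
    have := cdr_integral_sub_le hle1 hf hb
    simpa [Measure.restrict_apply_univ] using this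
  have h2 : (∫ x, f x ∂μ.restrict sᶜ) - (∫ x, f x ∂ν.restrict sᶜ)
      ≤ (ν sᶜ).toReal - (μ sᶜ).toReal := by
    have := cdr_integral_sub_le hle2 (f := fun x => -f x) (hf.neg)
      (fun x => by simpa using hb x)
    simp only [integral_neg, Measure.restrict_apply_univ] at this
    linarith
  have hmem : |(μ s).toReal - (ν s).toReal| + |(μ sᶜ).toReal - (ν sᶜ).toReal| ∈
      { r : ℝ | ∃ s : Set ℝ≥0, MeasurableSet s ∧
        r = |(μ s).toReal - (ν s).toReal| + |(μ sᶜ).toReal - (ν sᶜ).toReal| } :=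
    ⟨s, hs, rfl⟩
  have hsup := le_csSup hbdd hmem
  have e1 : (μ s).toReal - (ν s).toReal ≤ |(μ s).toReal - (ν s).toReal| := le_abs_self _
  have e2 : (ν sᶜ).toReal - (μ sᶜ).toReal ≤ |(μ sᶜ).toReal - (ν sᶜ).toReal| := by
    rw [abs_sub_comm]; exact le_abs_self _
  linarith

lemma cdr_toReal_le_one {x : ℝ≥0∞} (h : x ≤ 1) : x.toReal ≤ 1 := by
  simpa using ENNReal.toReal_mono (by simp) h

lemma convPow_mass_le {μ : Measure ℝ≥0} [IsFiniteMeasure μ] (hμ : μ univ ≤ 1) :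
    ∀ n, convPow μ n univ ≤ 1 := by
  intro n
  induction n with
  | zero => simp [convPow]
  | succ n ih =>
    haveI : IsFiniteMeasure (convPow μ n) := ⟨lt_of_le_of_lt ih ENNReal.one_lt_top⟩
    rw [convPow, conv_univ]
    exact mul_le_one' ih hμ

lemma convPow_isFinite {μ : Measure ℝ≥0} [IsFiniteMeasure μ] (hμ : μ univ ≤ 1) (n : ℕ) :
    IsFiniteMeasure (convPow μ n) :=
  ⟨lt_of_le_of_lt (convPow_mass_le hμ n) ENNReal.one_lt_top⟩

lemma cdr_summable_q {q : ℕ → ℝ≥0} (hq1 : ∑' k, q k = 1) : Summable q := by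
  by_contra h
  rw [tsum_eq_zero_of_not_summable h] at hq1
  exact one_ne_zero hq1.symm

lemma qMix_univ_eq (q : ℕ → ℝ≥0) (μ : Measure ℝ≥0) :
    qMix q μ univ = ∑' k, (q (k + 1) : ℝ≥0∞) * convPow μ (k + 1) univ := by
  rw [qMix, Measure.sum_apply _ MeasurableSet.univ]
  simp

lemma qMix_mass_le {q : ℕ → ℝ≥0} (hq1 : ∑' k, q k = 1) {μ : Measure ℝ≥0}
    [IsFiniteMeasure μ] (hμ : μ univ ≤ 1) : qMix q μ univ ≤ 1 := by
  rw [qMix_univ_eq]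
  calc ∑' k, (q (k + 1) : ℝ≥0∞) * convPow μ (k + 1) univ
      ≤ ∑' k, (q (k + 1) : ℝ≥0∞) * 1 := by
        exact ENNReal.tsum_le_tsum fun k =>
          mul_le_mul' le_rfl (convPow_mass_le hμ (k + 1))
    _ = ∑' k, (q (k + 1) : ℝ≥0∞) := by simp
    _ ≤ ∑' k, (q k : ℝ≥0∞) :=
        ENNReal.tsum_comp_le_tsum_of_injective (add_left_injective 1) (fun k => (q k : ℝ≥0∞))
    _ = 1 := by rw [← ENNReal.coe_tsum (cdr_summable_q hq1), hq1, ENNReal.coe_one]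

lemma qMix_isFinite {q : ℕ → ℝ≥0} (hq1 : ∑' k, q k = 1) {μ : Measure ℝ≥0}
    [IsFiniteMeasure μ] (hμ : μ univ ≤ 1) : IsFiniteMeasure (qMix q μ) :=
  ⟨lt_of_le_of_lt (qMix_mass_le hq1 hμ) ENNReal.one_lt_top⟩

lemma integral_qMix {q : ℕ → ℝ≥0} (hq1 : ∑' k, q k = 1) {μ : Measure ℝ≥0}
    [IsFiniteMeasure μ] (hμ : μ univ ≤ 1) {g : ℝ≥0 → ℝ} (hg : Measurable g)
    (hb : ∀ x, |g x| ≤ 1) :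
    ∫ x, g x ∂(qMix q μ) = ∑' k, (q (k + 1) : ℝ) * ∫ x, g x ∂(convPow μ (k + 1)) := by
  haveI := qMix_isFinite hq1 hμ
  have hint : Integrable g (qMix q μ) := cdr_integrable' hg.aestronglyMeasurable hb
  rw [qMix] at hint ⊢
  rw [integral_sum_measure hint]
  congr 1
  funext k
  rw [integral_smul_measure]
  simp

lemma le_tvDist {μ ν : Measure ℝ≥0} [IsFiniteMeasure μ] [IsFiniteMeasure ν] {f : ℝ≥0 → ℝ}
    (hf : Measurable f) (hb : ∀ x, |f x| ≤ 1) :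
    (∫ x, f x ∂μ) - (∫ x, f x ∂ν) ≤ tvDist μ ν :=
  le_tvDistSet hf hb (tvSet_bddAbove μ ν)

lemma conv_integral_diff_le {μ₁ μ₂ ν₁ ν₂ : Measure ℝ≥0} [IsFiniteMeasure μ₁]
    [IsFiniteMeasure μ₂] [IsFiniteMeasure ν₁] [IsFiniteMeasure ν₂]
    (hμ₂ : μ₂ univ ≤ 1) (hν₁ : ν₁ univ ≤ 1) {g : ℝ≥0 → ℝ} (hg : Measurable g)
    (hb : ∀ x, |g x| ≤ 1) :
    (∫ x, g x ∂(conv μ₁ ν₁)) - (∫ x, g x ∂(conv μ₂ ν₂)) ≤ tvDist μ₁ μ₂ + tvDist ν₁ ν₂ := by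
  have hgadd : Measurable fun p : ℝ≥0 × ℝ≥0 => g (p.1 + p.2) :=
    hg.comp (measurable_fst.add measurable_snd)
  set h : ℝ≥0 → ℝ := fun x => ∫ y, g (x + y) ∂ν₁ with hh
  have hhm : Measurable h :=
    (MeasureTheory.StronglyMeasurable.integral_prod_right'
      (ν := ν₁) (f := fun p : ℝ≥0 × ℝ≥0 => g (p.1 + p.2)) hgadd.stronglyMeasurable).measurable
  have hhb : ∀ x, |h x| ≤ 1 := by
    intro x
    refine le_trans (cdr_abs_integral_le (fun y => hb (x + y))) (cdr_toReal_le_one hν₁)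
  set h' : ℝ≥0 → ℝ := fun y => ∫ x, g (x + y) ∂μ₂ with hh'
  have hh'm : Measurable h' :=
    (MeasureTheory.StronglyMeasurable.integral_prod_left'
      (μ := μ₂) (f := fun p : ℝ≥0 × ℝ≥0 => g (p.1 + p.2)) hgadd.stronglyMeasurable).measurable
  have hh'b : ∀ y, |h' y| ≤ 1 := by
    intro y
    refine le_trans (cdr_abs_integral_le (fun x => hb (x + y))) (cdr_toReal_le_one hμ₂)
  have e1 : ∫ x, g x ∂(conv μ₁ ν₁) = ∫ x, h x ∂μ₁ := integral_conv hg hb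
  have e2 : ∫ x, g x ∂(conv μ₂ ν₂) = ∫ x, ∫ y, g (x + y) ∂ν₂ ∂μ₂ := integral_conv hg hb
  have swap1 : ∫ x, h x ∂μ₂ = ∫ y, h' y ∂ν₁ :=
    integral_integral_swap (cdr_integrable' hgadd.aestronglyMeasurable (fun p => hb _))
  have swap2 : ∫ x, ∫ y, g (x + y) ∂ν₂ ∂μ₂ = ∫ y, h' y ∂ν₂ :=
    integral_integral_swap (cdr_integrable' hgadd.aestronglyMeasurable (fun p => hb _))
  have d1 : (∫ x, h x ∂μ₁) - (∫ x, h x ∂μ₂) ≤ tvDist μ₁ μ₂ := le_tvDist hhm hhb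
  have d2 : (∫ y, h' y ∂ν₁) - (∫ y, h' y ∂ν₂) ≤ tvDist ν₁ ν₂ := le_tvDist hh'm hh'b
  rw [e1, e2, swap2]
  have := swap1 ▸ d1
  linarith

lemma convPow_integral_diff_le {μ ν : Measure ℝ≥0} [IsFiniteMeasure μ] [IsFiniteMeasure ν]
    (hμ : μ univ ≤ 1) (hν : ν univ ≤ 1) :
    ∀ j : ℕ, ∀ g : ℝ≥0 → ℝ, Measurable g → (∀ x, |g x| ≤ 1) →
      (∫ x, g x ∂(convPow μ j)) - (∫ x, g x ∂(convPow ν j)) ≤ j * tvDist μ ν := by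
  intro j
  induction j with
  | zero => intro g hg hb; simp [convPow]
  | succ j ih =>
    intro g hg hb
    haveI := convPow_isFinite hμ j
    haveI := convPow_isFinite hν j
    have htv : tvDist (convPow μ j) (convPow ν j) ≤ j * tvDist μ ν :=
      tvDist_le (mul_nonneg (Nat.cast_nonneg j) (tvDist_nonneg μ ν)) (fun f hf hfb => ih f hf hfb)
    have := conv_integral_diff_le (μ₁ := convPow μ j) (μ₂ := convPow ν j)
      (ν₁ := μ) (ν₂ := ν) (convPow_mass_le hν j) hμ hg hb
    rw [convPow, convPow]
    push_cast
    have h0 : (0:ℝ) ≤ tvDist μ ν := tvDist_nonneg μ ν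
    calc (∫ x, g x ∂(conv (convPow μ j) μ)) - ∫ x, g x ∂(conv (convPow ν j) ν)
        ≤ tvDist (convPow μ j) (convPow ν j) + tvDist μ ν := this
      _ ≤ j * tvDist μ ν + tvDist μ ν := by linarith
      _ = (j + 1) * tvDist μ ν := by ring

lemma cdr_m₁_nonneg {q : ℕ → ℝ≥0} {m₁ : ℝ} (hm₁ : HasSum (fun k : ℕ => (k : ℝ) * (q k : ℝ)) m₁) :
    0 ≤ m₁ :=
  hasSum_le (fun k => by positivity) hasSum_zero hm₁

lemma cdr_hasSum_shift {q : ℕ → ℝ≥0} {m₁ : ℝ}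
    (hm₁ : HasSum (fun k : ℕ => (k : ℝ) * (q k : ℝ)) m₁) :
    HasSum (fun k : ℕ => ((k : ℝ) + 1) * (q (k + 1) : ℝ)) m₁ := by
  have := (hasSum_nat_add_iff' (f := fun k : ℕ => (k : ℝ) * (q k : ℝ)) 1).2 hm₁
  simpa using this

lemma qMix_integral_diff_le {q : ℕ → ℝ≥0} {m₁ : ℝ} (hq1 : ∑' k, q k = 1)
    (hm₁ : HasSum (fun k : ℕ => (k : ℝ) * (q k : ℝ)) m₁)
    {μ ν : Measure ℝ≥0} [IsFiniteMeasure μ] [IsFiniteMeasure ν]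
    (hμ : μ univ ≤ 1) (hν : ν univ ≤ 1) {g : ℝ≥0 → ℝ} (hg : Measurable g)
    (hb : ∀ x, |g x| ≤ 1) :
    (∫ x, g x ∂(qMix q μ)) - (∫ x, g x ∂(qMix q ν)) ≤ m₁ * tvDist μ ν := by
  rw [integral_qMix hq1 hμ hg hb, integral_qMix hq1 hν hg hb]
  set A : ℕ → ℝ := fun k => (q (k + 1) : ℝ) * ∫ x, g x ∂(convPow μ (k + 1)) with hA
  set B : ℕ → ℝ := fun k => (q (k + 1) : ℝ) * ∫ x, g x ∂(convPow ν (k + 1)) with hB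
  have hqsum : Summable (fun k : ℕ => (q (k + 1) : ℝ)) :=
    ((NNReal.summable_coe.2 (cdr_summable_q hq1)).comp_injective (add_left_injective 1))
  have hAs : Summable A := by
    refine Summable.of_norm_bounded hqsum fun k => ?_
    haveI := convPow_isFinite hμ (k + 1)
    rw [hA, Real.norm_eq_abs, abs_mul, NNReal.abs_eq]
    calc (q (k+1) : ℝ) * |∫ x, g x ∂(convPow μ (k + 1))|
        ≤ (q (k+1) : ℝ) * 1 := by
          refine mul_le_mul_of_nonneg_left ?_ (q (k+1)).coe_nonneg
          exact le_trans (cdr_abs_integral_le hb) (cdr_toReal_le_one (convPow_mass_le hμ (k+1)))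
      _ = (q (k+1) : ℝ) := mul_one _
  have hBs : Summable B := by
    refine Summable.of_norm_bounded hqsum fun k => ?_
    haveI := convPow_isFinite hν (k + 1)
    rw [hB, Real.norm_eq_abs, abs_mul, NNReal.abs_eq]
    calc (q (k+1) : ℝ) * |∫ x, g x ∂(convPow ν (k + 1))|
        ≤ (q (k+1) : ℝ) * 1 := by
          refine mul_le_mul_of_nonneg_left ?_ (q (k+1)).coe_nonneg
          exact le_trans (cdr_abs_integral_le hb) (cdr_toReal_le_one (convPow_mass_le hν (k+1)))
      _ = (q (k+1) : ℝ) := mul_one _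
  rw [← hAs.tsum_sub hBs]
  have hRS : HasSum (fun k : ℕ => ((k : ℝ) + 1) * (q (k + 1) : ℝ) * tvDist μ ν)
      (m₁ * tvDist μ ν) := (cdr_hasSum_shift hm₁).mul_right _
  rw [← hRS.tsum_eq]
  refine Summable.tsum_le_tsum (fun k => ?_) (hAs.sub hBs) hRS.summable
  have := convPow_integral_diff_le hμ hν (k + 1) g hg hb
  have hq0' : (0:ℝ) ≤ (q (k+1) : ℝ) := (q (k+1)).coe_nonneg
  calc A k - B k = (q (k + 1) : ℝ) *
        ((∫ x, g x ∂(convPow μ (k + 1))) - ∫ x, g x ∂(convPow ν (k + 1))) := by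
          rw [hA, hB]; ring
    _ ≤ (q (k + 1) : ℝ) * ((k + 1 : ℕ) * tvDist μ ν) := mul_le_mul_of_nonneg_left this hq0'
    _ = ((k : ℝ) + 1) * (q (k + 1) : ℝ) * tvDist μ ν := by push_cast; ring

lemma step_integral_diff_le {q : ℕ → ℝ≥0} {m₁ : ℝ} (hq1 : ∑' k, q k = 1)
    (hm₁ : HasSum (fun k : ℕ => (k : ℝ) * (q k : ℝ)) m₁)
    {μ ν : Measure ℝ≥0} [IsFiniteMeasure μ] [IsFiniteMeasure ν]
    (hμ : μ univ ≤ 1) (hν : ν univ ≤ 1) {g : ℝ≥0 → ℝ} (hg : Measurable g)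
    (hb : ∀ x, |g x| ≤ 1) :
    (∫ x, g x ∂(conv μ (qMix q μ))) - (∫ x, g x ∂(conv ν (qMix q ν)))
      ≤ (1 + m₁) * tvDist μ ν := by
  haveI := qMix_isFinite hq1 hμ
  haveI := qMix_isFinite hq1 hν
  have h1 := conv_integral_diff_le (μ₁ := μ) (μ₂ := ν) (ν₁ := qMix q μ) (ν₂ := qMix q ν)
    hν (qMix_mass_le hq1 hμ) hg hb
  have h2 : tvDist (qMix q μ) (qMix q ν) ≤ m₁ * tvDist μ ν :=
    tvDist_le (mul_nonneg (cdr_m₁_nonneg hm₁) (tvDist_nonneg μ ν))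
      (fun f hf hfb => qMix_integral_diff_le hq1 hm₁ hμ hν hf hfb)
  have h0 : (0:ℝ) ≤ tvDist μ ν := tvDist_nonneg μ ν
  calc (∫ x, g x ∂(conv μ (qMix q μ))) - (∫ x, g x ∂(conv ν (qMix q ν)))
      ≤ tvDist μ ν + tvDist (qMix q μ) (qMix q ν) := h1
    _ ≤ tvDist μ ν + m₁ * tvDist μ ν := by linarith
    _ = (1 + m₁) * tvDist μ ν := by ring

open ProbabilityTheory in
def convPowK (κ : Kernel ℝ ℝ≥0) : ℕ → Kernel ℝ ℝ≥0
  | 0 => Kernel.const ℝ (Measure.dirac 0)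
  | n + 1 => Kernel.map (Kernel.prod (convPowK κ n) κ) (fun p => p.1 + p.2)

open ProbabilityTheory in
instance convPowK_sfinite (κ : Kernel ℝ ℝ≥0) [IsSFiniteKernel κ] (n : ℕ) :
    IsSFiniteKernel (convPowK κ n) := by
  induction n with
  | zero => rw [convPowK]; infer_instance
  | succ n ih => rw [convPowK]; infer_instance

open ProbabilityTheory in
lemma convPowK_apply (κ : Kernel ℝ ℝ≥0) [IsSFiniteKernel κ] (n : ℕ) (s : ℝ) :
    convPowK κ n s = convPow (κ s) n := by
  induction n with
  | zero => rw [convPowK, Kernel.const_apply]; rfl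
  | succ n ih =>
    rw [convPowK, Kernel.map_apply _ measurable_add,
      Kernel.prod_apply, ih]
    rfl

open ProbabilityTheory in
def qMixK (q : ℕ → ℝ≥0) (κ : Kernel ℝ ℝ≥0) [IsSFiniteKernel κ] : Kernel ℝ ℝ≥0 where
  toFun := fun s => qMix q (κ s)
  measurable' := by
    refine Measure.measurable_of_measurable_coe _ fun A hA => ?_
    have : ∀ s : ℝ, qMix q (κ s) A
        = ∑' k, (q (k + 1) : ℝ≥0∞) * (convPowK κ (k + 1) s) A := by
      intro s
      rw [qMix, Measure.sum_apply _ hA]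
      congr 1
      funext k
      rw [convPowK_apply]
      simp
    simp_rw [this]
    exact Measurable.ennreal_tsum fun k =>
      (Kernel.measurable_coe (convPowK κ (k + 1)) hA).const_mul _

open ProbabilityTheory in
lemma qMixK_apply (q : ℕ → ℝ≥0) (κ : Kernel ℝ ℝ≥0) [IsSFiniteKernel κ] (s : ℝ) :
    qMixK q κ s = qMix q (κ s) := rfl

open ProbabilityTheory in
lemma qMixK_isFinite (q : ℕ → ℝ≥0) (hq1 : ∑' k, q k = 1) (κ : Kernel ℝ ℝ≥0)
    [IsFiniteKernel κ] (hκ : ∀ s, κ s univ ≤ 1) : IsFiniteKernel (qMixK q κ) := by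
  refine ⟨⟨1, ENNReal.one_lt_top, fun s => ?_⟩⟩
  rw [qMixK_apply]
  haveI : IsFiniteMeasure (κ s) := ⟨lt_of_le_of_lt (hκ s) ENNReal.one_lt_top⟩
  exact qMix_mass_le hq1 (hκ s)

open ProbabilityTheory in
lemma cdr_meas_integral (q : ℕ → ℝ≥0) (hq1 : ∑' k, q k = 1) (κ : Kernel ℝ ℝ≥0)
    [IsFiniteKernel κ] (hκ : ∀ s, κ s univ ≤ 1)
    {γ : Type*} [MeasurableSpace γ] {e : γ → ℝ} (he : Measurable e)
    {F : γ × ℝ≥0 → ℝ} (hF : Measurable F) :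
    Measurable fun p : γ => ∫ x, F (p, x) ∂(conv (κ (e p)) (qMix q (κ (e p)))) := by
  haveI := qMixK_isFinite q hq1 κ hκ
  set η : Kernel γ ℝ≥0 :=
    Kernel.comap (Kernel.map (Kernel.prod κ (qMixK q κ)) (fun p => p.1 + p.2)) e he with hη
  have happ : ∀ p : γ, η p = conv (κ (e p)) (qMix q (κ (e p))) := by
    intro p
    rw [hη, Kernel.comap_apply, Kernel.map_apply _ measurable_add,
      Kernel.prod_apply, qMixK_apply]
    rfl
  simp_rw [← happ]
  exact (MeasureTheory.StronglyMeasurable.integral_kernel_prod_right'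
    (κ := η) hF.stronglyMeasurable).measurable

lemma cdr_exp_integral {a : ℝ} (t : ℝ) (ha : 0 < a) :
    ∫ s in (0:ℝ)..t, Real.exp (a * (s - t)) = (1 - Real.exp (-(a * t))) / a := by
  have h1 : (∫ s in (0:ℝ)..t, Real.exp (a * (s - t)))
      = ∫ s in (0:ℝ) - t..t - t, Real.exp (a * s) :=
    intervalIntegral.integral_comp_sub_right (fun s => Real.exp (a * s)) t
  rw [h1]
  have h2 : (∫ s in (0:ℝ) - t..t - t, Real.exp (a * s))
      = a⁻¹ • ∫ s in a * ((0:ℝ) - t)..a * (t - t), Real.exp s :=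
    intervalIntegral.integral_comp_mul_left Real.exp (ne_of_gt ha)
  rw [h2, show a * ((0:ℝ) - t) = -(a * t) by ring, show a * (t - t) = 0 by ring]
  simp only [integral_exp, Real.exp_zero, smul_eq_mul]
  rw [inv_mul_eq_div]

lemma cdr_exp_primitive {a : ℝ} (ha : 0 ≤ a) {t : ℝ} (ht : 0 ≤ t) :
    a * ∫ s in (0:ℝ)..t, Real.exp (a * (s - t)) ≤ 1 - Real.exp (-(a * t)) := by
  rcases eq_or_lt_of_le ha with h | h
  · simp [← h, Real.exp_zero]
  · rw [cdr_exp_integral t h]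
    rw [mul_div_cancel₀ _ (ne_of_gt h)]

lemma cdr_mass_le_one (a : ℝ) (ha : 0 ≤ a) (q : ℕ → ℝ≥0) (hq1 : ∑' k, q k = 1)
    (μ₀ : Measure ℝ≥0) [IsProbabilityMeasure μ₀]
    (μ : ℕ → ℝ → Measure ℝ≥0)
    (hfin : ∀ n t, IsFiniteMeasure (μ n t))
    (h0 : ∀ t : ℝ, 0 ≤ t →
      μ 0 t = (ENNReal.ofReal (Real.exp (-(a * t)))) •
        (μ₀.map (fun x => x - Real.toNNReal t)))
    (hrec : ∀ n : ℕ, ∀ f : ℝ≥0 → ℝ, Measurable f → (∃ C, ∀ x, |f x| ≤ C) →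
      ∀ t : ℝ, 0 ≤ t →
      ∫ x, f x ∂(μ (n + 1) t)
        = Real.exp (-(a * t)) * (∫ x, f (x - Real.toNNReal t) ∂μ₀)
          + a * ∫ s in (0:ℝ)..t, Real.exp (a * (s - t)) *
              ∫ x, f (x - Real.toNNReal (t - s)) ∂(conv (μ n s) (qMix q (μ n s)))) :
    ∀ n : ℕ, ∀ t : ℝ, 0 ≤ t → μ n t univ ≤ 1 := by
  intro n
  induction n with
  | zero =>
    intro t ht
    rw [h0 t ht]
    have hmap : (μ₀.map (fun x => x - Real.toNNReal t)) univ ≤ 1 := by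
      rw [Measure.map_apply (measurable_sub_const (Real.toNNReal t)) MeasurableSet.univ]
      simp
    calc (ENNReal.ofReal (Real.exp (-(a * t))) • μ₀.map (fun x => x - Real.toNNReal t)) univ
        = ENNReal.ofReal (Real.exp (-(a * t)))
          * (μ₀.map (fun x => x - Real.toNNReal t)) univ := rfl
      _ ≤ 1 * 1 := by
          refine mul_le_mul' ?_ hmap
          rw [ENNReal.ofReal_le_one]
          exact Real.exp_le_one_iff.2 (by nlinarith)
      _ = 1 := one_mul 1
  | succ n ih =>
    intro t ht
    haveI := hfin (n + 1) t
    have hone := hrec n (fun _ => (1:ℝ)) measurable_const ⟨1, fun x => by simp⟩ t ht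
    simp only [integral_const, smul_eq_mul, mul_one, measureReal_def, measure_univ, ENNReal.toReal_one] at hone
    -- bound the interval integral term
    set u : ℝ → ℝ := fun s => Real.exp (a * (s - t)) *
      (conv (μ n s) (qMix q (μ n s)) univ).toReal with hu
    have hbound : ∀ s ∈ Icc (0:ℝ) t, u s ≤ Real.exp (a * (s - t)) := by
      intro s hs
      haveI := hfin n s
      haveI := qMix_isFinite hq1 (ih s hs.1)
      have hconv : conv (μ n s) (qMix q (μ n s)) univ ≤ 1 := by
        rw [conv_univ]
        exact mul_le_one' (ih s hs.1) (qMix_mass_le hq1 (ih s hs.1))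
      calc u s ≤ Real.exp (a * (s - t)) * 1 := by
            refine mul_le_mul_of_nonneg_left (cdr_toReal_le_one hconv) (Real.exp_nonneg _)
        _ = _ := mul_one _
    have hub : a * (∫ s in (0:ℝ)..t, u s) ≤ 1 - Real.exp (-(a * t)) := by
      by_cases hInt : IntervalIntegrable u MeasureTheory.volume 0 t
      · have hIexp : IntervalIntegrable (fun s => Real.exp (a * (s - t)))
            MeasureTheory.volume 0 t :=
          (Real.continuous_exp.comp (by continuity)).intervalIntegrable 0 t
        have := intervalIntegral.integral_mono_on ht hInt hIexp hbound
        calc a * ∫ s in (0:ℝ)..t, u s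
            ≤ a * ∫ s in (0:ℝ)..t, Real.exp (a * (s - t)) :=
              mul_le_mul_of_nonneg_left this ha
          _ ≤ 1 - Real.exp (-(a * t)) := cdr_exp_primitive ha ht
      · rw [intervalIntegral.integral_undef hInt]
        have : Real.exp (-(a * t)) ≤ 1 := Real.exp_le_one_iff.2 (by nlinarith)
        simp [this]
    have hto : (μ (n + 1) t univ).toReal ≤ 1 := by
      rw [hone]
      have he : Real.exp (-(a * t)) ≤ 1 := Real.exp_le_one_iff.2 (by nlinarith)
      linarith [hub]
    rw [← ENNReal.ofReal_one, ← ENNReal.ofReal_toReal (measure_ne_top _ univ)]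
    exact ENNReal.ofReal_le_ofReal hto

lemma cdr_integral_indicator_one {ρ : Measure ℝ≥0} {A : Set ℝ≥0} (hA : MeasurableSet A) :
    ∫ x, A.indicator (fun _ => (1:ℝ)) x ∂ρ = (ρ A).toReal := by
  rw [integral_indicator hA]
  simp [Measure.restrict_apply_univ, measureReal_def]

open ProbabilityTheory in
lemma cdr_meas_family (a : ℝ) (ha : 0 ≤ a) (q : ℕ → ℝ≥0) (hq1 : ∑' k, q k = 1)
    (μ₀ : Measure ℝ≥0) [IsProbabilityMeasure μ₀]
    (μ : ℕ → ℝ → Measure ℝ≥0)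
    (hfin : ∀ n t, IsFiniteMeasure (μ n t))
    (hmass : ∀ n : ℕ, ∀ t : ℝ, 0 ≤ t → μ n t univ ≤ 1)
    (h0 : ∀ t : ℝ, 0 ≤ t →
      μ 0 t = (ENNReal.ofReal (Real.exp (-(a * t)))) •
        (μ₀.map (fun x => x - Real.toNNReal t)))
    (hrec : ∀ n : ℕ, ∀ f : ℝ≥0 → ℝ, Measurable f → (∃ C, ∀ x, |f x| ≤ C) →
      ∀ t : ℝ, 0 ≤ t →
      ∫ x, f x ∂(μ (n + 1) t)
        = Real.exp (-(a * t)) * (∫ x, f (x - Real.toNNReal t) ∂μ₀)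
          + a * ∫ s in (0:ℝ)..t, Real.exp (a * (s - t)) *
              ∫ x, f (x - Real.toNNReal (t - s)) ∂(conv (μ n s) (qMix q (μ n s)))) :
    ∀ n : ℕ, Measurable (fun s : ℝ => if 0 ≤ s then μ n s else 0) := by
  intro n
  induction n with
  | zero =>
    refine Measure.measurable_of_measurable_coe _ fun A hA => ?_
    have hsub : ∀ s : ℝ, Measurable (fun x : ℝ≥0 => x - Real.toNNReal s) :=
      fun s => measurable_sub_const _
    have key : (fun s : ℝ => (if 0 ≤ s then μ 0 s else 0) A)
        = (Ici (0:ℝ)).indicator (fun s => ENNReal.ofReal (Real.exp (-(a * s))) *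
            ∫⁻ x, A.indicator (fun _ => (1:ℝ≥0∞)) (x - Real.toNNReal s) ∂μ₀) := by
      funext s
      by_cases hs : 0 ≤ s
      · rw [if_pos hs, indicator_of_mem (mem_Ici.2 hs), h0 s hs]
        have hpre : μ₀ ((fun x : ℝ≥0 => x - Real.toNNReal s) ⁻¹' A)
            = ∫⁻ x, A.indicator (fun _ => (1:ℝ≥0∞)) (x - Real.toNNReal s) ∂μ₀ := by
          rw [← lintegral_indicator_one ((hsub s) hA)]
          refine lintegral_congr fun x => ?_
          by_cases hx : x - Real.toNNReal s ∈ A <;>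
            simp [Set.indicator_apply, hx, Set.mem_preimage]
        rw [Measure.smul_apply, Measure.map_apply (hsub s) hA, smul_eq_mul, hpre]
      · rw [if_neg hs, indicator_of_notMem (by simpa using hs)]
        simp
    rw [key]
    refine Measurable.indicator ?_ measurableSet_Ici
    refine Measurable.mul ?_ ?_
    · exact ENNReal.measurable_ofReal.comp
        (Real.measurable_exp.comp (measurable_const.mul measurable_id).neg)
    · refine Measurable.lintegral_prod_right' (f := fun p : ℝ × ℝ≥0 =>
        A.indicator (fun _ => (1:ℝ≥0∞)) (p.2 - Real.toNNReal p.1)) ?_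
      exact (measurable_const.indicator hA).comp
        (measurable_snd.sub (measurable_real_toNNReal.comp measurable_fst))
  | succ n ih =>
    set κ : Kernel ℝ ℝ≥0 := ⟨fun s : ℝ => if 0 ≤ s then μ n s else 0, ih⟩ with hκdef
    have hκapp : ∀ s : ℝ, κ s = if 0 ≤ s then μ n s else 0 := fun s => rfl
    have hκ1 : ∀ s : ℝ, κ s univ ≤ 1 := by
      intro s
      rw [hκapp]
      by_cases hs : 0 ≤ s
      · rw [if_pos hs]; exact hmass n s hs
      · rw [if_neg hs]; simp
    haveI : IsFiniteKernel κ := ⟨⟨1, ENNReal.one_lt_top, hκ1⟩⟩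
    refine Measure.measurable_of_measurable_coe _ fun A hA => ?_
    set ind : ℝ≥0 → ℝ := A.indicator (fun _ => (1:ℝ)) with hind
    have hindm : Measurable ind := measurable_const.indicator hA
    have hindb : ∀ x, |ind x| ≤ 1 := by
      intro x
      by_cases hx : x ∈ A <;> simp [hind, Set.indicator_apply, hx]
    set W : ℝ × ℝ → ℝ := fun p =>
      ({p : ℝ × ℝ | 0 < p.1 ∧ p.1 ≤ p.2}).indicator (fun p => Real.exp (a * (p.1 - p.2)) *
        ∫ x, ind (x - Real.toNNReal (p.2 - p.1)) ∂(conv (κ p.1) (qMix q (κ p.1)))) p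
      with hW
    have hWm : Measurable W := by
      refine Measurable.indicator ?_ ?_
      · refine Measurable.mul ?_ ?_
        · exact Real.measurable_exp.comp ((measurable_fst.sub measurable_snd).const_mul a)
        · exact cdr_meas_integral q hq1 κ hκ1 measurable_fst
            (F := fun pp : (ℝ × ℝ) × ℝ≥0 =>
              ind (pp.2 - Real.toNNReal (pp.1.2 - pp.1.1)))
            (hindm.comp (measurable_snd.sub (measurable_real_toNNReal.comp
              ((measurable_snd.comp measurable_fst).sub (measurable_fst.comp measurable_fst)))))
      · exact (measurableSet_lt measurable_const measurable_fst).inter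
          (measurableSet_le measurable_fst measurable_snd)
    set J : ℝ → ℝ := fun s => ∫ r, W (r, s) with hJ
    have hJm : Measurable J :=
      (MeasureTheory.StronglyMeasurable.integral_prod_left'
        (μ := MeasureTheory.volume) hWm.stronglyMeasurable).measurable
    set I₀ : ℝ → ℝ := fun s => ∫ x, ind (x - Real.toNNReal s) ∂μ₀ with hI₀
    have hI₀m : Measurable I₀ :=
      (MeasureTheory.StronglyMeasurable.integral_prod_right' (ν := μ₀)
        (f := fun p : ℝ × ℝ≥0 => ind (p.2 - Real.toNNReal p.1))
        ((hindm.comp (measurable_snd.sub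
          (measurable_real_toNNReal.comp measurable_fst))).stronglyMeasurable)).measurable
    have key : (fun s : ℝ => (if 0 ≤ s then μ (n + 1) s else 0) A)
        = (Ici (0:ℝ)).indicator (fun s =>
            ENNReal.ofReal (Real.exp (-(a * s)) * I₀ s + a * J s)) := by
      funext s
      by_cases hs : 0 ≤ s
      · rw [if_pos hs, indicator_of_mem (mem_Ici.2 hs)]
        have hr := hrec n ind hindm ⟨1, hindb⟩ s hs
        have hJeq : (∫ r in (0:ℝ)..s, Real.exp (a * (r - s)) *
            ∫ x, ind (x - Real.toNNReal (s - r)) ∂(conv (μ n r) (qMix q (μ n r)))) = J s := by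
          rw [intervalIntegral.integral_of_le hs, ← integral_indicator measurableSet_Ioc]
          congr 1
          funext r
          by_cases hr' : r ∈ Ioc 0 s
          · rw [indicator_of_mem hr']
            have : W (r, s) = Real.exp (a * (r - s)) *
                ∫ x, ind (x - Real.toNNReal (s - r)) ∂(conv (κ r) (qMix q (κ r))) := by
              simp only [hW]
              rw [indicator_of_mem ?_]
              exact ⟨hr'.1, hr'.2⟩
            rw [this, hκapp r, if_pos (le_of_lt hr'.1)]
          · rw [indicator_of_notMem hr']
            rw [Set.mem_Ioc] at hr'
            have hnot : (r, s) ∉ {p : ℝ × ℝ | 0 < p.1 ∧ p.1 ≤ p.2} := hr'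
            simp only [hW]
            rw [indicator_of_notMem hnot]
        rw [hJeq] at hr
        haveI := hfin (n + 1) s
        have : μ (n + 1) s A = ENNReal.ofReal ((μ (n + 1) s A).toReal) :=
          (ENNReal.ofReal_toReal (measure_ne_top _ _)).symm
        rw [this, ← cdr_integral_indicator_one hA, hr]
      · rw [if_neg hs, indicator_of_notMem (by simpa using hs)]
        simp
    rw [key]
    refine Measurable.indicator ?_ measurableSet_Ici
    refine ENNReal.measurable_ofReal.comp ?_
    refine Measurable.add ?_ (hJm.const_mul a)
    exact (Real.measurable_exp.comp (measurable_const.mul measurable_id).neg).mul hI₀m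

lemma tvDist_triangle (μ ν ρ : Measure ℝ≥0) [IsFiniteMeasure μ] [IsFiniteMeasure ν]
    [IsFiniteMeasure ρ] : tvDist μ ρ ≤ tvDist μ ν + tvDist ν ρ := by
  refine Real.sSup_le ?_ (add_nonneg (tvDist_nonneg _ _) (tvDist_nonneg _ _))
  rintro r ⟨s, hs, rfl⟩
  have h1 : |(μ s).toReal - (ν s).toReal| + |(μ sᶜ).toReal - (ν sᶜ).toReal| ≤ tvDist μ ν :=
    le_csSup (tvSet_bddAbove μ ν) ⟨s, hs, rfl⟩
  have h2 : |(ν s).toReal - (ρ s).toReal| + |(ν sᶜ).toReal - (ρ sᶜ).toReal| ≤ tvDist ν ρ :=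
    le_csSup (tvSet_bddAbove ν ρ) ⟨s, hs, rfl⟩
  have e1 : |(μ s).toReal - (ρ s).toReal| ≤
      |(μ s).toReal - (ν s).toReal| + |(ν s).toReal - (ρ s).toReal| := abs_sub_le _ _ _
  have e2 : |(μ sᶜ).toReal - (ρ sᶜ).toReal| ≤
      |(μ sᶜ).toReal - (ν sᶜ).toReal| + |(ν sᶜ).toReal - (ρ sᶜ).toReal| := abs_sub_le _ _ _
  linarith

open ProbabilityTheory in
lemma cdr_picard_est (a m₁ : ℝ) (ha : 0 ≤ a)
    (q : ℕ → ℝ≥0) (hq1 : ∑' k, q k = 1)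
    (hm₁ : HasSum (fun k : ℕ => (k : ℝ) * (q k : ℝ)) m₁)
    (μ₀ : Measure ℝ≥0) [IsProbabilityMeasure μ₀]
    (μ : ℕ → ℝ → Measure ℝ≥0)
    (hfin : ∀ n t, IsFiniteMeasure (μ n t))
    (hmass : ∀ n : ℕ, ∀ t : ℝ, 0 ≤ t → μ n t univ ≤ 1)
    (hmeas : ∀ n : ℕ, Measurable (fun s : ℝ => if 0 ≤ s then μ n s else 0))
    (hrec : ∀ n : ℕ, ∀ f : ℝ≥0 → ℝ, Measurable f → (∃ C, ∀ x, |f x| ≤ C) →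
      ∀ t : ℝ, 0 ≤ t →
      ∫ x, f x ∂(μ (n + 1) t)
        = Real.exp (-(a * t)) * (∫ x, f (x - Real.toNNReal t) ∂μ₀)
          + a * ∫ s in (0:ℝ)..t, Real.exp (a * (s - t)) *
              ∫ x, f (x - Real.toNNReal (t - s)) ∂(conv (μ n s) (qMix q (μ n s)))) :
    ∀ n : ℕ, ∀ t : ℝ, 0 ≤ t → ∀ f : ℝ≥0 → ℝ, Measurable f → (∀ x, |f x| ≤ 1) →
      (∫ x, f x ∂(μ (n + 1) t)) - (∫ x, f x ∂(μ n t))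
        ≤ 2 * (a * (m₁ + 1)) ^ n * t ^ n / (Nat.factorial n) := by
  have hm₁0 : 0 ≤ m₁ := cdr_m₁_nonneg hm₁
  -- the truncated families as kernels
  set κ : ℕ → Kernel ℝ ℝ≥0 := fun n => ⟨fun s : ℝ => if 0 ≤ s then μ n s else 0, hmeas n⟩
    with hκdef
  have hκapp : ∀ n (s : ℝ), κ n s = if 0 ≤ s then μ n s else 0 := fun n s => rfl
  have hκ1 : ∀ n (s : ℝ), κ n s univ ≤ 1 := by
    intro n s
    rw [hκapp]
    by_cases hs : 0 ≤ s
    · rw [if_pos hs]; exact hmass n s hs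
    · rw [if_neg hs]; simp
  haveI hκfin : ∀ n, IsFiniteKernel (κ n) := fun n => ⟨⟨1, ENNReal.one_lt_top, hκ1 n⟩⟩
  intro n
  induction n with
  | zero =>
    intro t ht f hf hb
    haveI := hfin 0 t
    haveI := hfin 1 t
    have h1 : |∫ x, f x ∂(μ 1 t)| ≤ 1 :=
      le_trans (cdr_abs_integral_le hb) (cdr_toReal_le_one (hmass 1 t ht))
    have h0' : |∫ x, f x ∂(μ 0 t)| ≤ 1 :=
      le_trans (cdr_abs_integral_le hb) (cdr_toReal_le_one (hmass 0 t ht))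
    have := abs_le.1 h1
    have := abs_le.1 h0'
    simp only [pow_zero, Nat.factorial_zero, Nat.cast_one, mul_one, div_one]
    linarith
  | succ n ih =>
    intro t ht f hf hb
    -- measurable integrands
    set G : ℕ → ℝ → ℝ := fun m r => Real.exp (a * (r - t)) *
      ∫ x, f (x - Real.toNNReal (t - r)) ∂(conv (κ m r) (qMix q (κ m r))) with hG
    have hFm : ∀ m, Measurable (G m) := by
      intro m
      refine Measurable.mul ?_ ?_
      · exact Real.measurable_exp.comp ((measurable_id.sub measurable_const).const_mul a)
      · exact cdr_meas_integral q hq1 (κ m) (hκ1 m) measurable_id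
          (F := fun p : ℝ × ℝ≥0 => f (p.2 - Real.toNNReal (t - p.1)))
          (hf.comp (measurable_snd.sub (measurable_real_toNNReal.comp
            (measurable_const.sub measurable_fst))))
    have hGb : ∀ m r, r ≤ t → |G m r| ≤ 1 := by
      intro m r hr
      haveI : IsFiniteMeasure (κ m r) := ⟨lt_of_le_of_lt (hκ1 m r) ENNReal.one_lt_top⟩
      haveI := qMix_isFinite hq1 (hκ1 m r)
      have hconv : conv (κ m r) (qMix q (κ m r)) univ ≤ 1 := by
        rw [conv_univ]
        exact mul_le_one' (hκ1 m r) (qMix_mass_le hq1 (hκ1 m r))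
      haveI : IsFiniteMeasure (conv (κ m r) (qMix q (κ m r))) :=
        ⟨lt_of_le_of_lt hconv ENNReal.one_lt_top⟩
      simp only [hG]
      rw [abs_mul, abs_of_nonneg (Real.exp_nonneg _)]
      have he : Real.exp (a * (r - t)) ≤ 1 := Real.exp_le_one_iff.2 (by nlinarith)
      have hi : |∫ x, f (x - Real.toNNReal (t - r)) ∂(conv (κ m r) (qMix q (κ m r)))| ≤ 1 :=
        le_trans (cdr_abs_integral_le (fun x => hb _)) (cdr_toReal_le_one hconv)
      calc Real.exp (a * (r - t)) * |∫ x, f (x - Real.toNNReal (t - r))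
            ∂(conv (κ m r) (qMix q (κ m r)))|
          ≤ 1 * 1 := mul_le_mul he hi (abs_nonneg _) zero_le_one
        _ = 1 := one_mul 1
    have hGint : ∀ m, IntervalIntegrable (G m) MeasureTheory.volume 0 t := by
      intro m
      rw [intervalIntegrable_iff_integrableOn_Ioc_of_le ht]
      refine Integrable.mono' (integrable_const 1)
        ((hFm m).aestronglyMeasurable.restrict) ?_
      refine (ae_restrict_iff' measurableSet_Ioc).2 (ae_of_all _ fun r hr => ?_)
      simpa using hGb m r hr.2
    -- hrec at levels n+1 and n
    have hr1 := hrec (n + 1) f hf ⟨1, hb⟩ t ht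
    have hr0 := hrec n f hf ⟨1, hb⟩ t ht
    have hcongr : ∀ m : ℕ, (∫ s in (0:ℝ)..t, Real.exp (a * (s - t)) *
        ∫ x, f (x - Real.toNNReal (t - s)) ∂(conv (μ m s) (qMix q (μ m s))))
        = ∫ s in (0:ℝ)..t, G m s := by
      intro m
      refine intervalIntegral.integral_congr fun r hr => ?_
      rw [uIcc_of_le ht] at hr
      simp only [hG]
      have : κ m r = μ m r := by rw [hκapp, if_pos hr.1]
      rw [this]
    rw [hcongr (n + 1)] at hr1
    rw [hcongr n] at hr0
    have hdiff : (∫ x, f x ∂(μ (n + 2) t)) - (∫ x, f x ∂(μ (n + 1) t))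
        = a * ∫ s in (0:ℝ)..t, (G (n + 1) s - G n s) := by
      rw [hr1, hr0, intervalIntegral.integral_sub (hGint (n + 1)) (hGint n)]
      ring
    -- pointwise bound on [0, t]
    set B : ℝ → ℝ := fun r => (1 + m₁) * (2 * (a * (m₁ + 1)) ^ n * r ^ n / (Nat.factorial n))
      with hB
    have hpt : ∀ r ∈ Icc (0:ℝ) t, G (n + 1) r - G n r ≤ B r := by
      intro r hr
      haveI := hfin (n + 1) r
      haveI := hfin n r
      have hD : tvDist (μ (n + 1) r) (μ n r)
          ≤ 2 * (a * (m₁ + 1)) ^ n * r ^ n / (Nat.factorial n) := by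
        refine tvDist_le ?_ fun g hg hgb => ih r hr.1 g hg hgb
        have hr0 : (0:ℝ) ≤ r := hr.1
        positivity
      have hκeq : ∀ m ∈ ({n, n+1} : Set ℕ), κ m r = μ m r := by
        intro m _
        rw [hκapp, if_pos hr.1]
      have hstep := step_integral_diff_le hq1 hm₁ (μ := μ (n + 1) r) (ν := μ n r)
        (hmass (n + 1) r hr.1) (hmass n r hr.1)
        (g := fun x => f (x - Real.toNNReal (t - r)))
        (hf.comp (measurable_sub_const _)) (fun x => hb _)
      have hDnn : 0 ≤ tvDist (μ (n + 1) r) (μ n r) := tvDist_nonneg _ _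
      have hGdiff : G (n + 1) r - G n r = Real.exp (a * (r - t)) *
          ((∫ x, f (x - Real.toNNReal (t - r)) ∂(conv (μ (n+1) r) (qMix q (μ (n+1) r))))
            - ∫ x, f (x - Real.toNNReal (t - r)) ∂(conv (μ n r) (qMix q (μ n r)))) := by
        simp only [hG]
        rw [hκeq (n+1) (by simp), hκeq n (by simp)]
        ring
      have he1 : Real.exp (a * (r - t)) ≤ 1 :=
        Real.exp_le_one_iff.2 (by nlinarith [hr.2])
      have hrhs : (0:ℝ) ≤ (1 + m₁) * tvDist (μ (n + 1) r) (μ n r) := by positivity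
      calc G (n + 1) r - G n r
          ≤ Real.exp (a * (r - t)) * ((1 + m₁) * tvDist (μ (n + 1) r) (μ n r)) := by
            rw [hGdiff]
            exact mul_le_mul_of_nonneg_left hstep (Real.exp_nonneg _)
        _ ≤ 1 * ((1 + m₁) * tvDist (μ (n + 1) r) (μ n r)) :=
            mul_le_mul_of_nonneg_right he1 hrhs
        _ = (1 + m₁) * tvDist (μ (n + 1) r) (μ n r) := one_mul _
        _ ≤ B r := by
            simp only [hB]
            exact mul_le_mul_of_nonneg_left hD (by linarith)
    have hBint : IntervalIntegrable B MeasureTheory.volume 0 t := by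
      have hc : Continuous B := by
        simp only [hB]
        exact continuous_const.mul ((continuous_const.mul (continuous_pow n)).div_const _)
      exact hc.intervalIntegrable 0 t
    have hmono := intervalIntegral.integral_mono_on ht ((hGint (n+1)).sub (hGint n)) hBint hpt
    have hBval : (∫ r in (0:ℝ)..t, B r)
        = (1 + m₁) * (2 * (a * (m₁ + 1)) ^ n / (Nat.factorial n)) * (t ^ (n+1) / (n+1)) := by
      simp only [hB]
      have : ∀ r : ℝ, (1 + m₁) * (2 * (a * (m₁ + 1)) ^ n * r ^ n / (Nat.factorial n))
          = ((1 + m₁) * (2 * (a * (m₁ + 1)) ^ n / (Nat.factorial n))) * r ^ n := by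
        intro r; ring
      simp_rw [this]
      rw [intervalIntegral.integral_const_mul, integral_pow]
      push_cast
      ring
    have hfinal : a * ∫ s in (0:ℝ)..t, (G (n + 1) s - G n s)
        ≤ 2 * (a * (m₁ + 1)) ^ (n + 1) * t ^ (n + 1) / (Nat.factorial (n + 1)) := by
      calc a * ∫ s in (0:ℝ)..t, (G (n + 1) s - G n s)
          ≤ a * ∫ r in (0:ℝ)..t, B r := mul_le_mul_of_nonneg_left hmono ha
        _ = 2 * (a * (m₁ + 1)) ^ (n + 1) * t ^ (n + 1) / (Nat.factorial (n + 1)) := by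
            rw [hBval, Nat.factorial_succ]
            have hfac : ((Nat.factorial n : ℝ)) ≠ 0 := by
              exact_mod_cast Nat.factorial_ne_zero n
            have hn1 : ((n:ℝ) + 1) ≠ 0 := by positivity
            push_cast
            field_simp
            ring
    rw [show n + 1 + 1 = n + 2 from rfl] at *
    rw [hdiff]
    exact hfinal

/-- The Picard iterates for the CDR mild equation form a Cauchy sequence in total
variation, uniformly on compact time intervals. -/
theorem picard_iterates_cauchy_tv (a m₁ : ℝ) (ha : 0 ≤ a)
    (q : ℕ → ℝ≥0) (hq0 : q 0 = 0) (hq1 : ∑' k, q k = 1)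
    (hm₁ : HasSum (fun k : ℕ => (k : ℝ) * (q k : ℝ)) m₁)
    (μ₀ : Measure ℝ≥0) [IsProbabilityMeasure μ₀]
    (μ : ℕ → ℝ → Measure ℝ≥0)
    (hfin : ∀ n t, IsFiniteMeasure (μ n t))
    (h0 : ∀ t : ℝ, 0 ≤ t →
      μ 0 t = (ENNReal.ofReal (Real.exp (-(a * t)))) •
        (μ₀.map (fun x => x - Real.toNNReal t)))
    (hrec : ∀ n : ℕ, ∀ f : ℝ≥0 → ℝ, Measurable f → (∃ C, ∀ x, |f x| ≤ C) →
      ∀ t : ℝ, 0 ≤ t →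
      ∫ x, f x ∂(μ (n + 1) t)
        = Real.exp (-(a * t)) * (∫ x, f (x - Real.toNNReal t) ∂μ₀)
          + a * ∫ s in (0:ℝ)..t, Real.exp (a * (s - t)) *
              ∫ x, f (x - Real.toNNReal (t - s)) ∂(conv (μ n s) (qMix q (μ n s)))) :
    ∀ m n : ℕ, 1 ≤ n → n < m → ∀ t : ℝ, 0 ≤ t →
      tvDist (μ n t) (μ m t)
        ≤ 2 * ∑' k : ℕ, (a * (m₁ + 1) * t) ^ (k + n) / (Nat.factorial (k + n)) := by
  intro m n hn hnm t ht
  have hm₁0 : 0 ≤ m₁ := cdr_m₁_nonneg hm₁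
  have hmass := cdr_mass_le_one a ha q hq1 μ₀ μ hfin h0 hrec
  have hmeas := cdr_meas_family a ha q hq1 μ₀ μ hfin hmass h0 hrec
  have hest := cdr_picard_est a m₁ ha q hq1 hm₁ μ₀ μ hfin hmass hmeas hrec
  set x : ℝ := a * (m₁ + 1) * t with hxdef
  have hx : 0 ≤ x := by positivity
  have hDk : ∀ k : ℕ, tvDist (μ k t) (μ (k + 1) t) ≤ 2 * x ^ k / (Nat.factorial k) := by
    intro k
    haveI := hfin k t
    haveI := hfin (k + 1) t
    refine tvDist_le (by positivity) fun f hf hb => ?_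
    have := hest k t ht (fun y => -f y) hf.neg (fun y => by simpa using hb y)
    simp only [integral_neg] at this
    have hpow : (a * (m₁ + 1)) ^ k * t ^ k = x ^ k := by
      rw [hxdef]
      exact (mul_pow (a * (m₁ + 1)) t k).symm
    rw [show 2 * (a * (m₁ + 1)) ^ k * t ^ k = 2 * ((a * (m₁ + 1)) ^ k * t ^ k) by ring,
      hpow] at this
    linarith
  have hchain : ∀ p : ℕ, tvDist (μ n t) (μ (n + p) t)
      ≤ ∑ j ∈ Finset.range p, 2 * x ^ (j + n) / (Nat.factorial (j + n)) := by
    intro p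
    induction p with
    | zero =>
      haveI := hfin n t
      simp only [Nat.add_zero, Finset.range_zero, Finset.sum_empty]
      refine Real.sSup_le ?_ le_rfl
      rintro r ⟨s, hs, rfl⟩
      simp
    | succ p ihp =>
      haveI := hfin n t
      haveI := hfin (n + p) t
      haveI := hfin (n + p + 1) t
      have htr := tvDist_triangle (μ n t) (μ (n + p) t) (μ (n + p + 1) t)
      have hstep := hDk (n + p)
      rw [Finset.sum_range_succ]
      have : n + (p + 1) = n + p + 1 := by ring
      rw [this]
      have hco : 2 * x ^ (n + p) / (Nat.factorial (n + p))
          = 2 * x ^ (p + n) / (Nat.factorial (p + n)) := by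
        rw [Nat.add_comm n p]
      linarith [htr, hstep, ihp, hco.symm.le]
  have hsummable : Summable (fun k : ℕ => x ^ (k + n) / (Nat.factorial (k + n))) :=
    (Real.summable_pow_div_factorial x).comp_injective (add_left_injective n)
  have hsum_le : ∑ j ∈ Finset.range (m - n), x ^ (j + n) / (Nat.factorial (j + n))
      ≤ ∑' k : ℕ, x ^ (k + n) / (Nat.factorial (k + n)) :=
    hsummable.sum_le_tsum (Finset.range (m - n)) (fun k _ => by positivity)
  have hmn : n + (m - n) = m := Nat.add_sub_cancel' (le_of_lt hnm)
  have := hchain (m - n)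
  rw [hmn] at this
  have hfactor : ∑ j ∈ Finset.range (m - n), 2 * x ^ (j + n) / (Nat.factorial (j + n))
      = 2 * ∑ j ∈ Finset.range (m - n), x ^ (j + n) / (Nat.factorial (j + n)) := by
    rw [Finset.mul_sum]
    refine Finset.sum_congr rfl fun j _ => by ring
  calc tvDist (μ n t) (μ m t)
      ≤ ∑ j ∈ Finset.range (m - n), 2 * x ^ (j + n) / (Nat.factorial (j + n)) := this
    _ = 2 * ∑ j ∈ Finset.range (m - n), x ^ (j + n) / (Nat.factorial (j + n)) := hfactor
    _ ≤ 2 * ∑' k : ℕ, x ^ (k + n) / (Nat.factorial (k + n)) := by linarith [hsum_le]
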